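/- Let n ≥ 1, let x_1,…,x_n be distinct complex numbers and y_1,…,y_n distinct complex numbers with x_i ≠ y_j for all i,j, assume x_i ≠ 0 for all i, and let u ∈ ℂ. Then det[ 1/(x_i − y_j) + u/x_i ]_{i,j=1}^n = ( 1 + u (1 − B(0)/A(0)) ) · det[ 1/(x_i − y_j) ]_{i,j=1}^n (the rank-one perturbation u/x_i depends only on the row index i). -/

import Mathlib

open Matrix Polynomial Finset

lemma cauchy_exists_z {n : ℕ} (hn : 1 ≤ n) (x y : Fin n → ℂ) (hy : Function.Injective y)
    (hxy : ∀ i j, x i ≠ y j) (hx0 : ∀ i, x i ≠ 0) :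
    ∃ z : Fin n → ℂ,
      (∀ i, ∑ j, (1 / (x i - y j)) * z j = 1 / x i) ∧
      ∑ j, z j = 1 - (∏ i, ((0:ℂ) - y i)) / (∏ i, ((0:ℂ) - x i)) := by
  classical
  set A0 : ℂ := ∏ i, ((0:ℂ) - x i) with hA0def
  have hA0 : A0 ≠ 0 := Finset.prod_ne_zero_iff.mpr fun i _ =>
    sub_ne_zero_of_ne (Ne.symm (hx0 i))
  set c : ℂ := (∏ i, ((0:ℂ) - y i)) / A0 with hcdef
  set Bp : ℂ[X] := Lagrange.nodal Finset.univ y with hBp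
  set Ap : ℂ[X] := Lagrange.nodal Finset.univ x with hAp
  set p : ℂ[X] := Bp - C c * Ap with hpdef
  have hcard : (Finset.univ : Finset (Fin n)).card = n := by simp
  have hevalB : ∀ t : ℂ, Polynomial.eval t Bp = ∏ i, (t - y i) := fun t => by
    rw [hBp, Lagrange.eval_nodal]
  have hevalA : ∀ t : ℂ, Polynomial.eval t Ap = ∏ i, (t - x i) := fun t => by
    rw [hAp, Lagrange.eval_nodal]
  have hp0 : p.coeff 0 = 0 := by
    rw [coeff_zero_eq_eval_zero]
    simp only [hpdef, eval_sub, eval_mul, eval_C, hevalB, hevalA]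
    rw [hcdef, div_mul_cancel₀ _ hA0, sub_self]
  set h : ℂ[X] := p.divX with hhdef
  have hXh : X * h = p := by
    conv_rhs => rw [← Polynomial.X_mul_divX_add p]
    rw [hp0, map_zero, add_zero]
  have hevalp : ∀ t : ℂ, Polynomial.eval t p = t * Polynomial.eval t h := fun t => by
    rw [← hXh]; simp
  have hdegh : h.degree < ((Finset.univ : Finset (Fin n)).card : WithBot ℕ) := by
    rw [hcard]
    by_cases hp' : p = 0
    · rw [hhdef, hp', Polynomial.divX_zero, Polynomial.degree_zero]
      exact_mod_cast WithBot.bot_lt_coe n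
    · have hub : p.degree ≤ (n : WithBot ℕ) := by
        refine le_trans (Polynomial.degree_sub_le _ _) ?_
        rw [max_le_iff]
        constructor
        · rw [hBp, Lagrange.degree_nodal, hcard]
        · refine le_trans (Polynomial.degree_mul_le _ _) ?_
          have h1 : (C c).degree ≤ 0 := Polynomial.degree_C_le
          have h2 : Ap.degree = (n : WithBot ℕ) := by rw [hAp, Lagrange.degree_nodal, hcard]
          calc (C c).degree + Ap.degree ≤ 0 + (n : WithBot ℕ) := by
                exact add_le_add h1 (le_of_eq h2)
            _ = (n : WithBot ℕ) := zero_add _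
      exact lt_of_lt_of_le (Polynomial.degree_divX_lt hp') hub
  have hinj : Set.InjOn y ↑(Finset.univ : Finset (Fin n)) := hy.injOn
  have hinterp : h = Lagrange.interpolate Finset.univ y fun j => Polynomial.eval (y j) h :=
    Lagrange.eq_interpolate hinj hdegh
  refine ⟨fun j => Lagrange.nodalWeight Finset.univ y j * Polynomial.eval (y j) h, ?_, ?_⟩
  · -- the linear system
    intro i
    have hN : Polynomial.eval (x i) Bp = ∏ j, (x i - y j) := hevalB _
    have hN0 : (∏ j, (x i - y j)) ≠ 0 :=
      Finset.prod_ne_zero_iff.mpr fun j _ => sub_ne_zero_of_ne (hxy i j)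
    have hAev : Polynomial.eval (x i) Ap = 0 := by
      rw [hevalA]
      exact Finset.prod_eq_zero (Finset.mem_univ i) (sub_self _)
    have hxh : x i * Polynomial.eval (x i) h = ∏ j, (x i - y j) := by
      have := hevalp (x i)
      rw [hpdef] at this
      simp only [eval_sub, eval_mul, eval_C, hAev, mul_zero, sub_zero] at this
      rw [← this, hN]
    have hnode : ∀ j ∈ (Finset.univ : Finset (Fin n)), x i ≠ y j := fun j _ => hxy i j
    have hintev := Lagrange.eval_interpolate_not_at_node
      (s := Finset.univ) (v := y) (x := x i) (fun j => Polynomial.eval (y j) h) hnode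
    rw [← hinterp] at hintev
    set S : ℂ := ∑ j, Lagrange.nodalWeight Finset.univ y j * (x i - y j)⁻¹ *
        Polynomial.eval (y j) h with hSdef
    have hevnod : Polynomial.eval (x i) (Lagrange.nodal Finset.univ y) = ∏ j, (x i - y j) :=
      Lagrange.eval_nodal
    rw [hevnod] at hintev
    have hkey : x i * ((∏ j, (x i - y j)) * S) = ∏ j, (x i - y j) := by
      rw [← hintev]; exact hxh
    have hxiS : S * x i = 1 := by
      have h2 : (∏ j, (x i - y j)) * (S * x i) = (∏ j, (x i - y j)) * 1 := by
        linear_combination hkey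
      exact mul_left_cancel₀ hN0 h2
    have hS : S = 1 / x i := (eq_div_iff (hx0 i)).mpr hxiS
    rw [← hS, hSdef]
    refine Finset.sum_congr rfl fun j _ => ?_
    rw [one_div]
    ring
  · -- the sum of z
    obtain ⟨m, rfl⟩ : ∃ m, n = m + 1 := ⟨n - 1, (Nat.succ_pred_eq_of_pos hn).symm⟩
    have hBc : Bp.coeff (m + 1) = 1 := by
      have hmB : Bp.Monic := Lagrange.nodal_monic
      have : Bp.natDegree = m + 1 := by rw [hBp, Lagrange.natDegree_nodal, hcard]
      rw [← this, hmB.coeff_natDegree]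
    have hAc : Ap.coeff (m + 1) = 1 := by
      have hmA : Ap.Monic := Lagrange.nodal_monic
      have : Ap.natDegree = m + 1 := by rw [hAp, Lagrange.natDegree_nodal, hcard]
      rw [← this, hmA.coeff_natDegree]
    have hpc : p.coeff (m + 1) = 1 - c := by
      rw [hpdef, Polynomial.coeff_sub, Polynomial.coeff_C_mul, hBc, hAc, mul_one]
    have hhc : h.coeff m = 1 - c := by
      rw [hhdef, Polynomial.coeff_divX, hpc]
    have hbasis : ∀ j, (Lagrange.basis Finset.univ y j).coeff m =
        Lagrange.nodalWeight Finset.univ y j := by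
      intro j
      rw [Lagrange.basis_eq_prod_sub_inv_mul_nodal_div (Finset.mem_univ j),
        ← Lagrange.nodal_erase_eq_nodal_div (Finset.mem_univ j), Polynomial.coeff_C_mul]
      have hdeg : (Lagrange.nodal (Finset.univ.erase j) y).natDegree = m := by
        rw [Lagrange.natDegree_nodal, Finset.card_erase_of_mem (Finset.mem_univ j), hcard]
        omega
      have hmon : (Lagrange.nodal (Finset.univ.erase j) y).Monic := Lagrange.nodal_monic
      have hone : (Lagrange.nodal (Finset.univ.erase j) y).coeff m = 1 := by
        have h1 := hmon.coeff_natDegree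
        rw [hdeg] at h1
        exact h1
      rw [hone, mul_one]
    have hic : (Lagrange.interpolate Finset.univ y fun j => Polynomial.eval (y j) h).coeff m =
        ∑ j, Polynomial.eval (y j) h * Lagrange.nodalWeight Finset.univ y j := by
      rw [Lagrange.interpolate_apply, Polynomial.finset_sum_coeff]
      refine Finset.sum_congr rfl fun j _ => ?_
      rw [Polynomial.coeff_C_mul, hbasis j]
    have : ∑ j, Lagrange.nodalWeight Finset.univ y j * Polynomial.eval (y j) h = 1 - c := by
      rw [← hhc, hinterp, hic, ← hinterp]
      exact Finset.sum_congr rfl fun j _ => mul_comm _ _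
    rw [this, hcdef, hA0def]


lemma det_rows_add_const {n : ℕ} (A : Matrix (Fin n) (Fin n) ℂ) (w : Fin n → ℂ) :
    Matrix.det (Matrix.of fun i j => A i j + w j) =
      A.det + ∑ i, (A.updateRow i w).det := by
  classical
  have hM : (Matrix.of fun i j => A i j + w j) = ((fun _ => w) + fun i => A i) := by
    ext i j; exact add_comm _ _
  have key := (Matrix.detRowAlternating (R := ℂ) (n := Fin n)).toMultilinearMap.map_add_univ
      (fun _ => w) (fun i => A i)
  have hdet : Matrix.det (Matrix.of fun i j => A i j + w j)
      = ∑ s : Finset (Fin n),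
          Matrix.detRowAlternating (s.piecewise (fun _ => w) (fun i => A i)) := by
    rw [hM]; exact key
  rw [hdet]
  -- split the sum
  set g : Finset (Fin n) → ℂ :=
    fun s => Matrix.detRowAlternating (s.piecewise (fun _ => w) (fun i => A i)) with hg
  have hzero : ∀ s : Finset (Fin n), 2 ≤ s.card → g s = 0 := by
    intro s hs
    obtain ⟨a, ha, b, hb, hab⟩ := Finset.one_lt_card.mp hs
    refine AlternatingMap.map_eq_zero_of_eq _ _ ?_ hab
    simp [Finset.piecewise_eq_of_mem _ _ _ ha, Finset.piecewise_eq_of_mem _ _ _ hb]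
  set T : Finset (Finset (Fin n)) :=
    insert ∅ (Finset.univ.image fun i : Fin n => ({i} : Finset (Fin n))) with hT
  have hsub : ∀ s : Finset (Fin n), s ∉ T → g s = 0 := by
    intro s hsT
    refine hzero s ?_
    by_contra hlt
    push_neg at hlt
    interval_cases h : s.card
    · exact hsT (by simp [hT, Finset.card_eq_zero.mp h])
    · obtain ⟨i, rfl⟩ := Finset.card_eq_one.mp h
      exact hsT (by simp [hT])
  have hsum : ∑ s : Finset (Fin n), g s = ∑ s ∈ T, g s := by
    refine (Finset.sum_subset (Finset.subset_univ T) ?_).symm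
    intro s _ hs; exact hsub s hs
  rw [hsum, hT, Finset.sum_insert (by simp), Finset.sum_image (by intro a _ b _ hab; exact Finset.singleton_injective hab)]
  have h0 : g ∅ = A.det := by simp [hg, Finset.piecewise_empty]; rfl
  have h1 : ∀ i, g {i} = (A.updateRow i w).det := by
    intro i
    simp only [hg, Finset.piecewise_singleton]
    rfl
  rw [h0]
  congr 1
  exact Finset.sum_congr rfl fun i _ => h1 i


lemma sum_det_updateColumn_mulVec {n : ℕ} (C : Matrix (Fin n) (Fin n) ℂ) (z : Fin n → ℂ) :
    ∑ j, (C.updateCol j (C *ᵥ z)).det = (∑ j, z j) * C.det := by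
  classical
  have h1 : (C *ᵥ z) = ∑ k, z k • (fun i => C i k) := by
    ext i; simp [Matrix.mulVec, dotProduct, mul_comm]
  have h2 : Matrix.cramer C (C *ᵥ z) = ∑ k, z k • (Pi.single k C.det : Fin n → ℂ) := by
    rw [h1, map_sum]
    refine Finset.sum_congr rfl fun k _ => ?_
    rw [_root_.map_smul, Matrix.cramer_row_self C _ k fun j => rfl]
  have h3 : ∀ j, (C.updateCol j (C *ᵥ z)).det = Matrix.cramer C (C *ᵥ z) j :=
    fun j => (Matrix.cramer_apply C _ j).symm
  simp only [h3, h2, Finset.sum_apply, Pi.smul_apply, Pi.single_apply, smul_eq_mul]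
  rw [Finset.sum_comm]
  simp [Finset.sum_mul]

open scoped BigOperators

/-- Rank-one row perturbation of a Cauchy determinant (Lemma: sumCauchyq2):
`det[1/(x_i−y_j) + u/x_i] = (1 + u(1 − B(0)/A(0))) det[1/(x_i−y_j)]`,
where `A(ζ) = ∏ (ζ − x_i)` and `B(ζ) = ∏ (ζ − y_i)`. -/
theorem cauchy_det_row_perturbation
    (n : ℕ) (hn : 1 ≤ n) (x y : Fin n → ℂ)
    (hx : Function.Injective x) (hy : Function.Injective y)
    (hxy : ∀ i j, x i ≠ y j)
    (hx0 : ∀ i, x i ≠ 0) (u : ℂ) :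
    Matrix.det (Matrix.of fun i j : Fin n => 1 / (x i - y j) + u / x i) =
      (1 + u * (1 - (∏ i, ((0 : ℂ) - y i)) / ∏ i, ((0 : ℂ) - x i))) *
        Matrix.det (Matrix.of fun i j : Fin n => 1 / (x i - y j)) := by
  classical
  set Cmat : Matrix (Fin n) (Fin n) ℂ := Matrix.of fun i j => 1 / (x i - y j) with hC
  set v : Fin n → ℂ := fun i => 1 / x i with hv
  set w : Fin n → ℂ := fun i => u / x i with hw
  obtain ⟨z, hz1, hz2⟩ := cauchy_exists_z hn x y hy hxy hx0
  have hmul : Cmat *ᵥ z = v := by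
    ext i
    simpa [Matrix.mulVec, dotProduct, hC, hv] using hz1 i
  have hMT : (Matrix.of fun i j : Fin n => 1 / (x i - y j) + u / x i)
      = (Matrix.of fun j i : Fin n => Cmatᵀ j i + w i)ᵀ := by
    ext i j
    simp [hC, hw]
  have step1 : Matrix.det (Matrix.of fun i j : Fin n => 1 / (x i - y j) + u / x i)
      = Cmat.det + u * ∑ j, (Cmat.updateCol j v).det := by
    rw [hMT, Matrix.det_transpose]
    rw [det_rows_add_const Cmatᵀ w]
    rw [Matrix.det_transpose]
    congr 1
    have hterm : ∀ j, (Cmatᵀ.updateRow j w).det = u * (Cmat.updateCol j v).det := by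
      intro j
      have hwv : w = u • v := by
        funext i; simp [hw, hv, div_eq_mul_inv]
      rw [Matrix.updateRow_transpose, Matrix.det_transpose, hwv,
        Matrix.det_updateCol_smul]
    rw [Finset.mul_sum]
    exact Finset.sum_congr rfl fun j _ => hterm j
  have step2 : ∑ j, (Cmat.updateCol j v).det = (∑ j, z j) * Cmat.det := by
    rw [← hmul]
    exact sum_det_updateColumn_mulVec Cmat z
  rw [step1, step2, hz2]
  ring
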